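/- Suppose q ∈ ℝ^n is a formal equilibrium of the polymatrix game (n̲,A). Then for every x in the relative interior Γ°_n̲ (points of Γ_n̲ with all coordinates positive), X_{(n̲,A)}(x) = π_A(x) ∇H(x), where H(x) = Σ_{i=1}^n q_i log x_i (so that ∇H(x) is the vector with components q_i/x_i). -/
import Mathlib

open Matrix

/-- Index set of a polymatrix game with signature `n : Fin p → ℕ`:
`i = ⟨α, k⟩` is the `k`-th strategy of group `α`. -/
abbrev Idx (p : ℕ) (n : Fin p → ℕ) : Type := (α : Fin p) × Fin (n α)

noncomputable section

/-- The polymatrix replicator vector field `X_{(n̲,A)}`; note that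
`Σ_β (x^α)ᵗ A^{α,β} x^β = Σ_{k ∈ α} x_k (Ax)_k`. -/
def replicator {p : ℕ} {n : Fin p → ℕ} (A : Matrix (Idx p n) (Idx p n) ℝ)
    (x : Idx p n → ℝ) (i : Idx p n) : ℝ :=
  x i * (A.mulVec x i - ∑ k : Fin (n i.1), x ⟨i.1, k⟩ * A.mulVec x ⟨i.1, k⟩)

/-- The polytope `Γ_n̲` (product of simplexes). -/
def Gamma (p : ℕ) (n : Fin p → ℕ) : Set (Idx p n → ℝ) :=
  {x | (∀ i, 0 ≤ x i) ∧ ∀ α : Fin p, ∑ k : Fin (n α), x ⟨α, k⟩ = 1}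

/-- The relative interior `Γ°_n̲`. -/
def GammaInt (p : ℕ) (n : Fin p → ℕ) : Set (Idx p n → ℝ) :=
  {x | (∀ i, 0 < x i) ∧ ∀ α : Fin p, ∑ k : Fin (n α), x ⟨α, k⟩ = 1}

/-- The block diagonal matrix `T_x = diag(T^1_x,…,T^p_x)`, `T^α_x = x^α 𝟙ᵗ - I`. -/
def Tmat {p : ℕ} {n : Fin p → ℕ} (x : Idx p n → ℝ) : Matrix (Idx p n) (Idx p n) ℝ :=
  fun i j => (if i.1 = j.1 then x i else 0) - (if i = j then 1 else 0)

/-- The bivector `π_A(x) = - T_x D_x A D_x T_xᵀ`. -/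
def piA {p : ℕ} {n : Fin p → ℕ} (A : Matrix (Idx p n) (Idx p n) ℝ) (x : Idx p n → ℝ) :
    Matrix (Idx p n) (Idx p n) ℝ :=
  -(Tmat x * Matrix.diagonal x * A * Matrix.diagonal x * (Tmat x)ᵀ)

/-- A formal equilibrium of the polymatrix game `(n̲, A)`. -/
def FormalEq {p : ℕ} {n : Fin p → ℕ} (A : Matrix (Idx p n) (Idx p n) ℝ)
    (q : Idx p n → ℝ) : Prop :=
  (∀ (α : Fin p) (i j : Fin (n α)), A.mulVec q ⟨α, i⟩ = A.mulVec q ⟨α, j⟩) ∧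
  ∀ α : Fin p, ∑ j : Fin (n α), q ⟨α, j⟩ = 1

lemma sigma_sum {p : ℕ} {n : Fin p → ℕ} (f : Idx p n → ℝ) :
    ∑ j : Idx p n, f j = ∑ α : Fin p, ∑ k : Fin (n α), f ⟨α, k⟩ := by
  rw [← Finset.univ_sigma_univ, Finset.sum_sigma]

lemma Tmat_mulVec {p : ℕ} {n : Fin p → ℕ} (x v : Idx p n → ℝ) (i : Idx p n) :
    (Tmat x).mulVec v i = x i * (∑ k : Fin (n i.1), v ⟨i.1, k⟩) - v i := by
  simp only [Matrix.mulVec, dotProduct, Tmat, sub_mul, ite_mul, one_mul, zero_mul,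
    Finset.sum_sub_distrib]
  congr 1
  · rw [sigma_sum (fun j => if i.1 = j.1 then x i * v j else 0), Finset.mul_sum]
    rw [Finset.sum_eq_single i.1]
    · simp
    · intro b _ hb
      simp [Ne.symm hb]
    · simp
  · rw [sigma_sum (fun j => if i = j then v j else 0)]
    rw [Finset.sum_eq_single i.1]
    · rw [Finset.sum_eq_single i.2]
      · simp
      · intro b _ hb
        have : i ≠ ⟨i.1, b⟩ := by
          intro h; apply hb; cases i; cases h; rfl
        simp [this]
      · simp
    · intro b _ hb
      apply Finset.sum_eq_zero
      intro k _
      have : i ≠ ⟨b, k⟩ := by intro h; apply hb; rw [h]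
      simp [this]
    · simp

lemma Tmat_transpose_mulVec {p : ℕ} {n : Fin p → ℕ} (x v : Idx p n → ℝ) (i : Idx p n) :
    (Tmat x)ᵀ.mulVec v i = (∑ k : Fin (n i.1), x ⟨i.1, k⟩ * v ⟨i.1, k⟩) - v i := by
  simp only [Matrix.mulVec, dotProduct, Matrix.transpose_apply, Tmat, sub_mul, ite_mul,
    one_mul, zero_mul, Finset.sum_sub_distrib]
  congr 1
  · rw [sigma_sum (fun j => if j.1 = i.1 then x j * v j else 0)]
    rw [Finset.sum_eq_single i.1]
    · simp
    · intro b _ hb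
      simp [hb]
    · simp
  · rw [sigma_sum (fun j => if j = i then v j else 0)]
    rw [Finset.sum_eq_single i.1]
    · rw [Finset.sum_eq_single i.2]
      · simp
      · intro b _ hb
        have : (⟨i.1, b⟩ : Idx p n) ≠ i := by
          intro h; apply hb; cases i; cases h; rfl
        simp [this]
      · simp
    · intro b _ hb
      apply Finset.sum_eq_zero
      intro k _
      have : (⟨b, k⟩ : Idx p n) ≠ i := by intro h; apply hb; rw [← h]
      simp [this]
    · simp

/-- If `q` is a formal equilibrium of `(n̲,A)` then on the relative interior of `Γ_n̲`
the replicator field is the `π_A`-gradient of `H(x) = Σ_i q_i log x_i`,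
whose gradient vector has components `q_i / x_i`. -/
theorem stmt5 {p : ℕ} {n : Fin p → ℕ} (hn : ∀ α, 0 < n α)
    (A : Matrix (Idx p n) (Idx p n) ℝ) (q : Idx p n → ℝ) (hq : FormalEq A q)
    (x : Idx p n → ℝ) (hx : x ∈ GammaInt p n) (i : Idx p n) :
    replicator A x i = (piA A x).mulVec (fun j => q j / x j) i := by
  obtain ⟨hq1, hq2⟩ := hq
  obtain ⟨hxpos, hxsum⟩ := hx
  have hx0 : ∀ j, x j ≠ 0 := fun j => (hxpos j).ne'
  -- step 1 : v1 = Tᵀ (q/x)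
  have h1 : (Tmat x)ᵀ.mulVec (fun j => q j / x j) = fun j => 1 - q j / x j := by
    funext j
    rw [Tmat_transpose_mulVec]
    congr 1
    rw [← hq2 j.1]
    apply Finset.sum_congr rfl
    intro k _
    rw [mul_comm]
    exact div_mul_cancel₀ _ (hx0 _)
  -- step 2 : v2 = D v1 = x - q
  have h2 : (Matrix.diagonal x).mulVec (fun j => 1 - q j / x j) = fun j => x j - q j := by
    funext j
    rw [Matrix.mulVec_diagonal, mul_sub, mul_one]
    congr 1
    rw [mul_comm]
    exact div_mul_cancel₀ _ (hx0 j)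
  -- step 3 : v3 = A v2
  have h3 : A.mulVec (fun j => x j - q j) = fun j => A.mulVec x j - A.mulVec q j := by
    have : (fun j => x j - q j) = x - q := rfl
    rw [this, Matrix.mulVec_sub]
    rfl
  -- step 4 : v4 = D v3
  have h4 : (Matrix.diagonal x).mulVec (fun j => A.mulVec x j - A.mulVec q j)
      = fun j => x j * (A.mulVec x j - A.mulVec q j) := by
    funext j
    rw [Matrix.mulVec_diagonal]
  -- assemble
  have e1 : (piA A x).mulVec (fun j => q j / x j) i
      = -((Tmat x).mulVec ((Matrix.diagonal x).mulVec (A.mulVec ((Matrix.diagonal x).mulVec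
          ((Tmat x)ᵀ.mulVec (fun j => q j / x j))))) i) := by
    rw [piA, Matrix.neg_mulVec, Matrix.mulVec_mulVec, Matrix.mulVec_mulVec,
      Matrix.mulVec_mulVec, Matrix.mulVec_mulVec]
    rfl
  rw [e1, h1, h2, h3, h4, Tmat_mulVec]
  have hc : ∀ k : Fin (n i.1), A.mulVec q ⟨i.1, k⟩ = A.mulVec q i := by
    intro k
    obtain ⟨α, l⟩ := i
    exact hq1 α k l
  have hsum : ∑ k : Fin (n i.1), x ⟨i.1, k⟩ * (A.mulVec x ⟨i.1, k⟩ - A.mulVec q ⟨i.1, k⟩)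
      = (∑ k : Fin (n i.1), x ⟨i.1, k⟩ * A.mulVec x ⟨i.1, k⟩) - A.mulVec q i := by
    simp only [mul_sub, Finset.sum_sub_distrib]
    congr 1
    simp only [hc]
    rw [← Finset.sum_mul, hxsum i.1, one_mul]
  rw [hsum, replicator]
  ring
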